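/- If a two-dimensional integer configuration c is annihilated by a line polynomial in direction u ∈ ℤ² \ {0}, then c is periodic with period nu for some nonzero integer n. -/

import Mathlib

private lemma seq_ext (a : ℤ → ℂ) (N : Finset ℤ) (m M : ℤ)
    (hm : m ∈ N) (hM : M ∈ N) (hmM : m < M)
    (hmin : ∀ j ∈ N, m ≤ j) (hmax : ∀ j ∈ N, j ≤ M)
    (ham : a m ≠ 0) (haM : a M ≠ 0)
    (s1 s2 : ℤ → ℤ)
    (h1 : ∀ k, ∑ j ∈ N, a j * (s1 (k - j) : ℂ) = 0)
    (h2 : ∀ k, ∑ j ∈ N, a j * (s2 (k - j) : ℂ) = 0)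
    (t0 : ℤ)
    (hwin : ∀ i, t0 ≤ i → i < t0 + (M - m) → s1 i = s2 i) :
    ∀ t, s1 t = s2 t := by
  set d := M - m with hd
  have key : ∀ k, ∑ j ∈ N, a j * ((s1 (k - j) : ℂ) - (s2 (k - j) : ℂ)) = 0 := by
    intro k
    simp only [mul_sub, Finset.sum_sub_distrib, h1 k, h2 k, sub_zero]
  have step_up : ∀ t, (∀ i, t ≤ i → i < t + d → s1 i = s2 i) →
      ∀ i, t + 1 ≤ i → i < t + 1 + d → s1 i = s2 i := by
    intro t hQt i hi1 hi2
    rcases lt_or_ge i (t + d) with h | h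
    · exact hQt i (by omega) h
    · have hieq : i = t + d := by omega
      subst hieq
      have hsum := key (t + d + m)
      have hone := Finset.sum_eq_single_of_mem m hm
        (f := fun j => a j * ((s1 (t + d + m - j) : ℂ) - (s2 (t + d + m - j) : ℂ)))
        (by
          intro j hj hne
          have hj1 : m < j := lt_of_le_of_ne (hmin j hj) (Ne.symm hne)
          have hj2 : j ≤ M := hmax j hj
          rw [hQt (t + d + m - j) (by omega) (by omega), sub_self, mul_zero])
      simp only [add_sub_cancel_right] at hone
      rw [hone] at hsum
      rcases mul_eq_zero.mp hsum with h' | h'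
      · exact absurd h' ham
      · have h'' : (s1 (t + d) : ℂ) = (s2 (t + d) : ℂ) := sub_eq_zero.mp h'
        exact_mod_cast h''
  have step_down : ∀ t, (∀ i, t ≤ i → i < t + d → s1 i = s2 i) →
      ∀ i, t - 1 ≤ i → i < t - 1 + d → s1 i = s2 i := by
    intro t hQt i hi1 hi2
    rcases le_or_gt t i with h | h
    · exact hQt i h (by omega)
    · have hieq : i = t - 1 := by omega
      subst hieq
      have hsum := key (t - 1 + M)
      have hone := Finset.sum_eq_single_of_mem M hM
        (f := fun j => a j * ((s1 (t - 1 + M - j) : ℂ) - (s2 (t - 1 + M - j) : ℂ)))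
        (by
          intro j hj hne
          have hj1 : m ≤ j := hmin j hj
          have hj2 : j < M := lt_of_le_of_ne (hmax j hj) hne
          rw [hQt (t - 1 + M - j) (by omega) (by omega), sub_self, mul_zero])
      simp only [add_sub_cancel_right] at hone
      rw [hone] at hsum
      rcases mul_eq_zero.mp hsum with h' | h'
      · exact absurd h' haM
      · have h'' : (s1 (t - 1) : ℂ) = (s2 (t - 1) : ℂ) := sub_eq_zero.mp h'
        exact_mod_cast h''
  have hall : ∀ t : ℤ, ∀ i, t0 + t ≤ i → i < t0 + t + d → s1 i = s2 i := by
    intro t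
    induction t using Int.induction_on with
    | zero => intro i h1' h2'; exact hwin i (by omega) (by omega)
    | succ k ih =>
      intro i h1' h2'
      exact step_up (t0 + k) ih i (by omega) (by omega)
    | pred k ih =>
      intro i h1' h2'
      exact step_down (t0 - k) ih i (by omega) (by omega)
  intro t
  exact hall (t - t0) t (by omega) (by omega)

/-- If a two-dimensional configuration `c : ℤ² → ℤ` with finite image is
annihilated by a line polynomial in direction `u ≠ 0` (a Laurent polynomial
whose support has at least two elements and is contained in `ℤu`), then `c` is
`n·u`-periodic for some nonzero integer `n`. -/
theorem line_polynomial_annihilator_implies_periodic (c : ℤ × ℤ → ℤ)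
    (hc : (Set.range c).Finite) (u : ℤ × ℤ) (hu : u ≠ 0)
    (f : (ℤ × ℤ) →₀ ℂ)
    (hsupp2 : 2 ≤ f.support.card)
    (hline : ∀ v ∈ f.support, ∃ n : ℤ, v = n • u)
    (hann : ∀ v, ∑ w ∈ f.support, f w * (c (v - w) : ℂ) = 0) :
    ∃ n : ℤ, n ≠ 0 ∧ ∀ v, c (v - n • u) = c v := by
  classical
  -- injectivity of scalar action on u
  have huinj : ∀ m n : ℤ, m • u = n • u → m = n := by
    intro m n h
    by_contra hne
    apply hu
    have h0 : (m - n) • u = 0 := by rw [sub_smul, h, sub_self]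
    have h1 : (m - n) * u.1 = 0 := congrArg Prod.fst h0
    have h2 : (m - n) * u.2 = 0 := congrArg Prod.snd h0
    have hmn : m - n ≠ 0 := sub_ne_zero.mpr hne
    have e1 : u.1 = 0 := (mul_eq_zero.mp h1).resolve_left hmn
    have e2 : u.2 = 0 := (mul_eq_zero.mp h2).resolve_left hmn
    exact Prod.ext e1 e2
  set φ : ℤ × ℤ → ℤ := fun w => if h : ∃ n : ℤ, w = n • u then h.choose else 0 with hφdef
  have hφ : ∀ w ∈ f.support, w = φ w • u := by
    intro w hw
    have hex := hline w hw
    simp only [hφdef, dif_pos hex]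
    exact hex.choose_spec
  set N : Finset ℤ := f.support.image φ with hN
  have hNmem : ∀ j ∈ N, j • u ∈ f.support := by
    intro j hj
    rcases Finset.mem_image.mp hj with ⟨w, hw, rfl⟩
    rwa [← hφ w hw]
  have hsupp_eq : f.support = N.image (fun j => j • u) := by
    ext w
    constructor
    · intro hw
      exact Finset.mem_image.mpr ⟨φ w, Finset.mem_image.mpr ⟨w, hw, rfl⟩, (hφ w hw).symm⟩
    · intro hw
      rcases Finset.mem_image.mp hw with ⟨j, hj, rfl⟩
      exact hNmem j hj
  set a : ℤ → ℂ := fun j => f (j • u) with ha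
  have haj : ∀ j ∈ N, a j ≠ 0 := by
    intro j hj
    exact Finsupp.mem_support_iff.mp (hNmem j hj)
  have hNcard : 2 ≤ N.card := by
    have : N.card = f.support.card := Finset.card_image_of_injOn (by
      intro w1 h1 w2 h2 he
      rw [hφ w1 h1, hφ w2 h2, he])
    omega
  have hNne : N.Nonempty := Finset.card_pos.mp (by omega)
  set m0 : ℤ := N.min' hNne with hm0
  set M0 : ℤ := N.max' hNne with hM0
  have hm0N : m0 ∈ N := N.min'_mem hNne
  have hM0N : M0 ∈ N := N.max'_mem hNne
  have hmin : ∀ j ∈ N, m0 ≤ j := fun j hj => N.min'_le j hj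
  have hmax : ∀ j ∈ N, j ≤ M0 := fun j hj => N.le_max' j hj
  have hmM : m0 < M0 := N.min'_lt_max'_of_card (by omega)
  -- recurrence over lines
  have hann' : ∀ x, ∑ j ∈ N, a j * (c (x - j • u) : ℂ) = 0 := by
    intro x
    have h := hann x
    rw [hsupp_eq, Finset.sum_image (by intro j1 _ j2 _ he; exact huinj j1 j2 he)] at h
    exact h
  set S : Finset ℤ := hc.toFinset with hS
  set dn : ℕ := (M0 - m0).toNat with hdn
  have hdn1 : 1 ≤ dn := by omega
  set B : ℕ := S.card ^ dn with hB
  refine ⟨(B.factorial : ℤ), by exact_mod_cast B.factorial_pos.ne', ?_⟩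
  intro v
  set s : ℤ → ℤ := fun k => c (v + k • u) with hs
  have hrec : ∀ k, ∑ j ∈ N, a j * (s (k - j) : ℂ) = 0 := by
    intro k
    have h := hann' (v + k • u)
    have he : ∀ j : ℤ, v + k • u - j • u = v + (k - j) • u := by
      intro j; rw [sub_smul]; ring_nf
    simp only [he] at h
    exact h
  -- pigeonhole on windows
  set Wn : ℕ → (Fin dn → ℤ) := fun k i => s ((k : ℤ) + (i : ℕ)) with hW
  have hmaps : ∀ k ∈ Finset.range (B + 1), Wn k ∈ Fintype.piFinset (fun _ : Fin dn => S) := by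
    intro k _
    rw [Fintype.mem_piFinset]
    intro i
    simp only [hW, hS, Set.Finite.mem_toFinset, hs]
    exact ⟨_, rfl⟩
  have hcardlt : (Fintype.piFinset (fun _ : Fin dn => S)).card < (Finset.range (B + 1)).card := by
    rw [Finset.card_range, Fintype.card_piFinset]
    simp [hB]
  obtain ⟨k1, hk1, k2, hk2, hne, heq⟩ :=
    Finset.exists_ne_map_eq_of_card_lt_of_maps_to hcardlt hmaps
  -- wlog k1 < k2
  wlog hlt : k1 < k2 generalizing k1 k2
  · exact this k2 hk2 k1 hk1 hne.symm heq.symm (by omega)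
  set p : ℤ := (k2 : ℤ) - k1 with hp
  have hp1 : 1 ≤ p := by omega
  have hpB : p ≤ B := by
    simp only [Finset.mem_range] at hk1 hk2
    omega
  -- window agreement
  have hwin : ∀ i, (k1 : ℤ) ≤ i → i < (k1 : ℤ) + (M0 - m0) → s i = s (i + p) := by
    intro i h1 h2
    have hlt' : (i - (k1 : ℤ)).toNat < dn := by omega
    have hcf := congrFun heq ⟨(i - (k1 : ℤ)).toNat, hlt'⟩
    simp only [hW] at hcf
    have e1 : (k1 : ℤ) + ((i - (k1 : ℤ)).toNat : ℤ) = i := by omega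
    have e2 : (k2 : ℤ) + ((i - (k1 : ℤ)).toNat : ℤ) = i + p := by omega
    rwa [e1, e2] at hcf
  have hper : ∀ t, s t = s (t + p) :=
    seq_ext a N m0 M0 hm0N hM0N hmM hmin hmax (haj m0 hm0N) (haj M0 hM0N)
      s (fun t => s (t + p)) hrec
      (by intro k; simpa [add_sub_right_comm] using hrec (k + p))
      (k1 : ℤ) hwin
  have hiter : ∀ (j : ℕ) (t : ℤ), s t = s (t + p * j) := by
    intro j
    induction j with
    | zero => intro t; simp
    | succ j ih =>
      intro t
      rw [ih t, hper (t + p * j)]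
      congr 1
      push_cast
      ring
  -- p divides B!
  have hdvd : p.toNat ∣ B.factorial := Nat.dvd_factorial (by omega) (by omega)
  obtain ⟨q, hq⟩ := hdvd
  have hpnat : ((p.toNat : ℤ)) = p := by omega
  have hq' : p * (q : ℤ) = (B.factorial : ℤ) := by
    rw [← hpnat]; exact_mod_cast hq.symm
  have hfin := hiter q (-(B.factorial : ℤ))
  have h0 : -(B.factorial : ℤ) + p * (q : ℤ) = 0 := by rw [hq']; ring
  rw [h0] at hfin
  calc c (v - (B.factorial : ℤ) • u) = s (-(B.factorial : ℤ)) := by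
        simp [hs, neg_smul, sub_eq_add_neg]
    _ = s 0 := hfin
    _ = c v := by simp [hs]
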